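/- Let U ⊆ V be a set of vertices in a parity game that is closed with respect to player α, and let σ be a strategy for player α defined on all α-vertices of U with values in U. If the maximum priority on every cycle of the finite graph G[U, σ] — vertex set U, with edges (u,v) ∈ E such that u, v ∈ U and (u ∉ dom(σ) or σ(u) = v) — has α's parity, then every play in Plays(U, σ) remains in U forever and is won by player α; hence U is an α-dominion with winning strategy σ. -/

import Mathlib

open scoped Classical

/-- A parity game on a finite vertex type `V`.  Player `false` is Even and
player `true` is Odd; `owner v` is the player controlling vertex `v`,
`edge` is the (left-total) move relation and `pr` assigns priorities. -/
structure ParityGame (V : Type) [Fintype V] where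
  owner : V → Bool
  edge : V → V → Prop
  total : ∀ v, ∃ w, edge v w
  pr : V → ℕ

namespace ParityGame

variable {V : Type} [Fintype V] (G : ParityGame V)

/-- The player whose parity matches the priority `p` (`false` = Even, `true` = Odd). -/
def playerOf (p : ℕ) : Bool := decide (p % 2 = 1)

/-- A play is an infinite sequence of vertices consistent with the edge relation. -/
def IsPlay (π : ℕ → V) : Prop := ∀ i, G.edge (π i) (π (i + 1))

/-- The set of vertices occurring infinitely often in `π`. -/
def infOcc (π : ℕ → V) : Set V := {v | ∀ n : ℕ, ∃ m, n ≤ m ∧ π m = v}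

/-- The highest priority of a vertex in `S`. -/
noncomputable def maxPr (S : Set V) : ℕ := sSup (G.pr '' S)

/-- Player `α` wins the play `π` iff the highest priority occurring infinitely
often in `π` has `α`'s parity. -/
def Wins (α : Bool) (π : ℕ → V) : Prop := playerOf (G.maxPr (infOcc π)) = α

/-- A (positional, partial) strategy for player `α`. -/
def IsStrategy (α : Bool) (σ : V → Option V) : Prop :=
  ∀ v w, σ v = some w → G.owner v = α ∧ G.edge v w

/-- A play is consistent with the strategy `σ`. -/
def Consistent (σ : V → Option V) (π : ℕ → V) : Prop :=
  ∀ i w, σ (π i) = some w → π (i + 1) = w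

/-- All plays starting in `U` that are consistent with `σ`. -/
def PlaysFrom (U : Set V) (σ : V → Option V) : Set (ℕ → V) :=
  {π | G.IsPlay π ∧ π 0 ∈ U ∧ Consistent σ π}

/-- `U` is closed with respect to player `α`: every `α`-vertex of `U` has a
successor in `U` and every opponent vertex of `U` has all successors in `U`. -/
def ClosedFor (α : Bool) (U : Set V) : Prop :=
  (∀ v ∈ U, G.owner v = α → ∃ w ∈ U, G.edge v w) ∧
  (∀ v ∈ U, G.owner v ≠ α → ∀ w, G.edge v w → w ∈ U)

/-- `D` is an `α`-dominion with (winning) strategy `σ`: `D` is closed for `α`,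
`σ` is a strategy of `α` defined on all `α`-vertices of `D` with values in `D`,
and `α` wins every consistent play from `D`. -/
def IsDominionWith (α : Bool) (D : Set V) (σ : V → Option V) : Prop :=
  G.ClosedFor α D ∧ G.IsStrategy α σ ∧
  (∀ v ∈ D, G.owner v = α → ∃ w ∈ D, σ v = some w) ∧
  ∀ π ∈ G.PlaysFrom D σ, G.Wins α π

/-- `D` is an `α`-dominion. -/
def IsDominion (α : Bool) (D : Set V) : Prop := ∃ σ, G.IsDominionWith α D σ

/-- The value of a play: the highest priority occurring infinitely often. -/
noncomputable def playValue (π : ℕ → V) : ℕ := G.maxPr (infOcc π)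

/-- `D` is a `p`-dominion with winning strategy `σ`: a dominion such that `p` is
the maximum, over all consistent plays from `D`, of the highest priority seen
infinitely often. -/
def IsPDominionWith (α : Bool) (p : ℕ) (D : Set V) (σ : V → Option V) : Prop :=
  G.IsDominionWith α D σ ∧ IsGreatest (G.playValue '' G.PlaysFrom D σ) p

/-- `D` is a `p`-dominion for player `α`. -/
def IsPDominion (α : Bool) (p : ℕ) (D : Set V) : Prop := ∃ σ, G.IsPDominionWith α p D σ

/-- The edges of the subgame `G[U,σ]` induced by `U` and the strategy `σ`. -/
def subEdge (U : Set V) (σ : V → Option V) (u v : V) : Prop :=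
  u ∈ U ∧ v ∈ U ∧ G.edge u v ∧ (σ u = none ∨ σ u = some v)

/-- `G[U,σ]` is strongly connected. -/
def StronglyConnected (U : Set V) (σ : V → Option V) : Prop :=
  ∀ u ∈ U, ∀ v ∈ U, Relation.ReflTransGen (G.subEdge U σ) u v

/-- A cycle of `G[U,σ]`: from `v` through the list `l` back to `v`. -/
def IsCycle (U : Set V) (σ : V → Option V) (v : V) (l : List V) : Prop :=
  List.Chain (G.subEdge U σ) v (l ++ [v])

/-- Player `α` wins all cycles of `G[U,σ]`: the maximum priority on every cycle
has `α`'s parity. -/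
def WinsAllCycles (α : Bool) (U : Set V) (σ : V → Option V) : Prop :=
  ∀ v l, G.IsCycle U σ v l → playerOf (G.maxPr {x | x ∈ v :: l}) = α

/-- `(U, σ)` is a tangle: `U` is nonempty, `σ` is a strategy for the player `α`
of the parity of the highest priority of `U`, defined exactly on the
`α`-vertices of `U` with values in `U`, the subgame `G[U,σ]` is strongly
connected, and player `α` wins all cycles of `G[U,σ]`. -/
def IsTangle (U : Set V) (σ : V → Option V) : Prop :=
  U.Nonempty ∧
  (∀ v w, σ v = some w → v ∈ U ∧ w ∈ U ∧ G.owner v = playerOf (G.maxPr U) ∧ G.edge v w) ∧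
  (∀ v ∈ U, G.owner v = playerOf (G.maxPr U) → (σ v).isSome) ∧
  G.StronglyConnected U σ ∧
  G.WinsAllCycles (playerOf (G.maxPr U)) U σ

/-- The escapes `E_T(T)` of a tangle with vertex set `U`: the successors outside
`U` of the opponent's vertices in `U`. -/
def escapes (U : Set V) : Set V :=
  {v | v ∉ U ∧ ∃ u ∈ U, G.owner u ≠ playerOf (G.maxPr U) ∧ G.edge u v}

/-- The restriction of a strategy to a set `U`. -/
noncomputable def restrict (σ : V → Option V) (U : Set V) : V → Option V :=
  fun v => if v ∈ U then σ v else none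

/-- The attractor of `A` for player `α`: the least fixpoint of
`Z := A ∪ {v ∈ V_α | E(v) ∩ Z ≠ ∅} ∪ {v ∈ V_ᾱ | E(v) ⊆ Z}`. -/
inductive Attr (α : Bool) (A : Set V) : V → Prop
  | base : ∀ v, v ∈ A → Attr α A v
  | step : ∀ v w, G.owner v = α → G.edge v w → Attr α A w → Attr α A v
  | forced : ∀ v, G.owner v ≠ α → (∀ w, G.edge v w → Attr α A w) → Attr α A v

/-- The attractor of `A` for player `α`, as a set. -/
def attrSet (α : Bool) (A : Set V) : Set V := {v | G.Attr α A v}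

/-- The tangle attractor of `A` for player `α` with tangle set `TT`: the least
fixpoint additionally attracting all vertices of `α`-tangles of `TT` whose
escapes all lie in the attracting set. -/
inductive TAttr (α : Bool) (TT : Set (Set V × (V → Option V))) (A : Set V) : V → Prop
  | base : ∀ v, v ∈ A → TAttr α TT A v
  | step : ∀ v w, G.owner v = α → G.edge v w → TAttr α TT A w → TAttr α TT A v
  | forced : ∀ v, G.owner v ≠ α → (∀ w, G.edge v w → TAttr α TT A w) → TAttr α TT A v
  | tangle : ∀ (U : Set V) (τ : V → Option V) (v : V), (U, τ) ∈ TT →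
      G.IsTangle U τ → playerOf (G.maxPr U) = α →
      (∀ w ∈ G.escapes U, TAttr α TT A w) → v ∈ U → TAttr α TT A v

/-- The tangle attractor of `A` for player `α`, as a set. -/
def tattrSet (α : Bool) (TT : Set (Set V × (V → Option V))) (A : Set V) : Set V :=
  {v | G.TAttr α TT A v}

end ParityGame

namespace ParityGame

variable {V : Type} [Fintype V]

private lemma chain_of_steps {V : Type} (r : V → V → Prop) (π : ℕ → V)
    (h : ∀ i, r (π i) (π (i + 1))) :
    ∀ n a, List.Chain r (π a) ((List.range n).map (fun i => π (a + 1 + i))) := by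
  intro n
  induction n with
  | zero => intro a; simp; exact List.Chain.nil
  | succ n ih =>
    intro a
    rw [List.range_succ_eq_map]
    simp only [List.map_cons, List.map_map]
    refine List.Chain.cons (by simpa using h a) ?_
    have hfun : ((fun i => π (a + 1 + i)) ∘ Nat.succ) = fun i => π (a + 1 + 1 + i) := by
      funext i
      simp only [Function.comp]
      congr 1
      omega
    rw [hfun]
    exact ih (a + 1)

/-- if `U` is closed for `α`, `σ` is an `α`-strategy defined on
all `α`-vertices of `U` with values in `U`, and every cycle of `G[U,σ]` is won
by `α`, then every consistent play from `U` stays in `U` and is won by `α`;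
hence `U` is an `α`-dominion with winning strategy `σ`. -/
theorem closed_winning_cycles_dominion (G : ParityGame V) (α : Bool) (U : Set V)
    (σ : V → Option V) (hclosed : G.ClosedFor α U) (hσ : G.IsStrategy α σ)
    (hdom : ∀ v ∈ U, G.owner v = α → ∃ w ∈ U, σ v = some w)
    (hcyc : G.WinsAllCycles α U σ) :
    (∀ π ∈ G.PlaysFrom U σ, (∀ i, π i ∈ U) ∧ G.Wins α π) ∧
      G.IsDominionWith α U σ := by
  have main : ∀ π ∈ G.PlaysFrom U σ, (∀ i, π i ∈ U) ∧ G.Wins α π := by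
    rintro π ⟨hplay, h0, hcons⟩
    have hU : ∀ i, π i ∈ U := by
      intro i
      induction i with
      | zero => exact h0
      | succ i ih =>
        by_cases hown : G.owner (π i) = α
        · obtain ⟨w, hwU, hw⟩ := hdom _ ih hown
          rw [hcons i w hw]; exact hwU
        · exact hclosed.2 _ ih hown _ (hplay i)
    refine ⟨hU, ?_⟩
    have hsub : ∀ i, G.subEdge U σ (π i) (π (i + 1)) := by
      intro i
      refine ⟨hU i, hU (i + 1), hplay i, ?_⟩
      cases h : σ (π i) with
      | none => exact Or.inl rfl
      | some w => exact Or.inr (congrArg some (hcons i w h)).symm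
    -- infOcc is nonempty
    obtain ⟨y, hy⟩ := Finite.exists_infinite_fiber π
    have hyinf : y ∈ infOcc π := by
      intro n
      have hi : (π ⁻¹' {y}).Infinite := Set.infinite_coe_iff.mp hy
      obtain ⟨m, hm, hnm⟩ := hi.exists_notMem_finite (Set.finite_Iio n)
      exact ⟨m, by simpa using hnm, hm⟩
    -- the max priority on infOcc is attained
    have hne : (G.pr '' infOcc π).Nonempty := ⟨G.pr y, y, hyinf, rfl⟩
    have hfin : (G.pr '' infOcc π).Finite := (Set.toFinite _).image _
    have hmem : G.maxPr (infOcc π) ∈ G.pr '' infOcc π := hne.csSup_mem hfin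
    obtain ⟨v, hv, hpv⟩ := hmem
    -- eventually the play stays in infOcc
    have hchoice : ∀ x : V, x ∉ infOcc π → ∃ n, ∀ m, n ≤ m → π m ≠ x := by
      intro x hx
      simp only [infOcc, Set.mem_setOf_eq, not_forall, not_exists] at hx
      obtain ⟨n, hn⟩ := hx
      exact ⟨n, fun m hm hmx => hn m ⟨hm, hmx⟩⟩
    let g : V → ℕ := fun x => if hx : x ∈ infOcc π then 0 else (hchoice x hx).choose
    set N : ℕ := Finset.univ.sup g with hN
    have hNocc : ∀ m, N ≤ m → π m ∈ infOcc π := by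
      intro m hm
      by_contra hx
      have hgle : g (π m) ≤ N := Finset.le_sup (Finset.mem_univ _)
      have := (hchoice (π m) hx).choose_spec m (by
        have : g (π m) = (hchoice (π m) hx).choose := dif_neg hx
        omega)
      exact this rfl
    -- find two visits of v after N
    obtain ⟨m, hNm, hmv⟩ := hv N
    obtain ⟨m', hm'ge, hm'v⟩ := hv (m + 1)
    have hmm' : m < m' := lt_of_lt_of_le (Nat.lt_succ_self m) hm'ge
    -- build the cycle
    set k : ℕ := m' - m with hk
    have hkpos : 1 ≤ k := by omega
    set l : List V := (List.range (k - 1)).map (fun i => π (m + 1 + i)) with hl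
    have hlast : π (m + 1 + (k - 1)) = v := by
      rw [show m + 1 + (k - 1) = m' by omega]; exact hm'v
    have hsplit : l ++ [v] = (List.range k).map (fun i => π (m + 1 + i)) := by
      rw [show k = (k - 1) + 1 by omega, List.range_succ, List.map_append]
      simp [hl, hlast]
    have hcycle : G.IsCycle U σ v l := by
      unfold IsCycle
      rw [hsplit, ← hmv]
      exact chain_of_steps _ π hsub k m
    have hαcyc := hcyc v l hcycle
    -- all cycle vertices occur infinitely often
    have hsubset : {x | x ∈ v :: l} ⊆ infOcc π := by
      intro x hx
      rcases List.mem_cons.mp hx with h | h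
      · subst h; exact hv
      · obtain ⟨i, hi, hix⟩ := List.mem_map.mp (hl ▸ h)
        subst hix
        exact hNocc _ (by omega)
    -- equality of the two maxima
    have hle1 : G.maxPr {x | x ∈ v :: l} ≤ G.maxPr (infOcc π) := by
      unfold maxPr
      refine csSup_le ⟨G.pr v, v, List.mem_cons_self, rfl⟩ ?_
      rintro p ⟨x, hx, rfl⟩
      exact le_csSup hfin.bddAbove ⟨x, hsubset hx, rfl⟩
    have hle2 : G.maxPr (infOcc π) ≤ G.maxPr {x | x ∈ v :: l} := by
      rw [← hpv]
      exact le_csSup ((Set.Finite.image _ (List.finite_toSet _)).bddAbove)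
        ⟨v, List.mem_cons_self, rfl⟩
    have heq : G.maxPr {x | x ∈ v :: l} = G.maxPr (infOcc π) := le_antisymm hle1 hle2
    unfold Wins
    rw [← heq]
    exact hαcyc
  exact ⟨main, hclosed, hσ, hdom, fun π hπ => (main π hπ).2⟩

end ParityGame
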